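/- arXiv:1511.05378 — 2 statements merged into one kernel-verified Lean document; each statement's English description precedes it below -/
import Mathlib

section
/- Let H be a Hilbert space, A: D(A) ⊆ H → H selfadjoint and non-negative, and B: D(B) ⊆ H → H linear with D(A) ⊆ D(B) such that both B and B* are A-bounded with A-bound less than 1. Assume there exists c > 0 with Re⟨Bφ, φ⟩ ≥ c‖φ‖² and Re⟨B*φ, φ⟩ ≥ c‖φ‖² for all φ ∈ D(A). Then A + B (with domain D(A)) is bijective onto H with bounded inverse satisfying ‖(A+B)^{-1}‖ ≤ 1/c. -/
open scoped ComplexInnerProductSpace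

private theorem pmap_congr {R E F : Type*} [Ring R] [AddCommGroup E] [Module R E]
    [AddCommGroup F] [Module R F] (f g : E →ₗ.[R] F) (h : f = g) (x : E) (hx : x ∈ f.domain) :
    f ⟨x, hx⟩ = g ⟨x, h ▸ hx⟩ := by subst h; rfl

private theorem exists_fixed {H : Type*} [NormedAddCommGroup H] [CompleteSpace H]
    (F : H → H) (r : ℝ) (hr0 : 0 ≤ r) (hr : r < 1)
    (hF : ∀ x y, ‖F x - F y‖ ≤ r * ‖x - y‖) : ∃ z, F z = z := by
  have hK : (r.toNNReal : ℝ) = r := Real.coe_toNNReal r hr0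
  have hcon : ContractingWith r.toNNReal F := by
    constructor
    · rw [← NNReal.coe_lt_coe, hK]; exact_mod_cast hr
    · apply LipschitzWith.of_dist_le_mul
      intro x y
      rw [dist_eq_norm, dist_eq_norm, hK]
      exact hF x y
  obtain ⟨z, hz, -⟩ := hcon.exists_fixedPoint (0 : H) (edist_ne_top _ _)
  exact ⟨z, hz⟩

private theorem cauchy_of_cauchy {H : Type*} [NormedAddCommGroup H]
    (u v : ℕ → H) (K : ℝ) (hK : 0 ≤ K)
    (h : ∀ n m, ‖u n - u m‖ ≤ K * ‖v n - v m‖) (hv : CauchySeq v) : CauchySeq u := by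
  rw [Metric.cauchySeq_iff] at hv ⊢
  intro ε hε
  obtain ⟨N, hN⟩ := hv (ε / (K + 1)) (by positivity)
  refine ⟨N, fun m hm n hn => ?_⟩
  have h1 := hN m hm n hn
  have h2 := h m n
  rw [dist_eq_norm] at h1 ⊢
  have h3 : K * ‖v m - v n‖ ≤ K * (ε / (K + 1)) := mul_le_mul_of_nonneg_left h1.le hK
  have h4 : K * (ε / (K + 1)) < ε := by
    rw [mul_div_assoc', div_lt_iff₀ (by positivity)]
    nlinarith
  linarith

set_option maxHeartbeats 1000000 in
open scoped ComplexInnerProductSpace in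
/-- Let `A` be selfadjoint and non-negative, and let `B` be such that
`B` and `B*` are `A`-bounded with `A`-bound `< 1` and satisfy
`Re⟨Bφ,φ⟩ ≥ c‖φ‖²`, `Re⟨B*φ,φ⟩ ≥ c‖φ‖²` on `D(A)` for some `c > 0`. Then `A + B`
(with domain `D(A)`) is a bijection onto `H` whose inverse is bounded by `1/c`. -/
theorem stmt4
    {H : Type*} [NormedAddCommGroup H] [InnerProductSpace ℂ H] [CompleteSpace H]
    (A B : H →ₗ.[ℂ] H)
    (hA : A.adjoint = A)
    (hApos : ∀ φ : A.domain, 0 ≤ (⟪A φ, (φ : H)⟫).re)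
    (hdomB : A.domain ≤ B.domain)
    (hdomB' : A.domain ≤ B.adjoint.domain)
    (κ : ℝ) (hκ0 : 0 ≤ κ) (hκ : κ < 1)
    (hBbound : ∀ κ' > κ, ∃ C > 0, ∀ φ : A.domain,
      ‖B ⟨(φ : H), hdomB φ.2⟩‖ ≤ κ' * ‖A φ‖ + C * ‖(φ : H)‖)
    (hBstarbound : ∀ κ' > κ, ∃ C > 0, ∀ φ : A.domain,
      ‖B.adjoint ⟨(φ : H), hdomB' φ.2⟩‖ ≤ κ' * ‖A φ‖ + C * ‖(φ : H)‖)
    (c : ℝ) (hc : 0 < c)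
    (hBcoer : ∀ φ : A.domain,
      c * ‖(φ : H)‖ ^ 2 ≤ (⟪B ⟨(φ : H), hdomB φ.2⟩, (φ : H)⟫).re)
    (hBstarcoer : ∀ φ : A.domain,
      c * ‖(φ : H)‖ ^ 2 ≤ (⟪B.adjoint ⟨(φ : H), hdomB' φ.2⟩, (φ : H)⟫).re) :
    (∀ y : H, ∃! φ : A.domain, A φ + B ⟨(φ : H), hdomB φ.2⟩ = y) ∧
    (∀ (y : H) (φ : A.domain), A φ + B ⟨(φ : H), hdomB φ.2⟩ = y →
      ‖(φ : H)‖ ≤ (1 / c) * ‖y‖) := by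
  classical
  -- A is densely defined
  have hdense : Dense (A.domain : Set H) := by
    by_contra hnd
    have h0 : ∀ y : A.adjoint.domain, A.adjoint y = 0 :=
      fun y => LinearPMap.adjoint_apply_of_not_dense hnd y
    have h0' : ∀ y : A.domain, A y = 0 := by rw [hA] at h0; exact h0
    have hTop : ∀ y : H, y ∈ A.adjoint.domain := by
      intro y
      apply LinearPMap.mem_adjoint_domain_of_exists
      exact ⟨0, fun x => by simp [h0' x]⟩
    have hdomeq : A.adjoint.domain = A.domain := congrArg LinearPMap.domain hA
    apply hnd
    rw [← hdomeq]
    have : A.adjoint.domain = (⊤ : Submodule ℂ H) := by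
      apply Submodule.eq_top_iff'.mpr hTop
    rw [this]
    simpa using dense_univ
  -- A is symmetric
  have hsymm : ∀ u v : A.domain, ⟪A u, (v : H)⟫ = ⟪(u : H), A v⟫ := by
    have hfa := LinearPMap.adjoint_isFormalAdjoint (T := A) hdense
    rw [hA] at hfa
    exact fun u v => hfa u v
  -- adjoint membership criterion
  have adjMem : ∀ y w : H, (∀ φ : A.domain, ⟪A φ, y⟫ = ⟪(φ : H), w⟫) →
      ∃ hy : y ∈ A.domain, A ⟨y, hy⟩ = w := by
    intro y w hyw
    have h1 : ∀ x : A.domain, ⟪w, (x : H)⟫ = ⟪y, A x⟫ := by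
      intro x
      rw [← inner_conj_symm, ← hyw x, inner_conj_symm]
    have hy : y ∈ A.adjoint.domain := LinearPMap.mem_adjoint_domain_of_exists y ⟨w, h1⟩
    have h2 : A.adjoint ⟨y, hy⟩ = w := LinearPMap.adjoint_apply_eq hdense ⟨y, hy⟩ fun x => h1 x
    refine ⟨hA ▸ hy, ?_⟩
    rw [← pmap_congr A.adjoint A hA y hy]
    exact h2
  -- A is closed
  have hclosed : ∀ (φ : ℕ → A.domain) (x z : H),
      Filter.Tendsto (fun n => ((φ n : H))) Filter.atTop (nhds x) →
      Filter.Tendsto (fun n => A (φ n)) Filter.atTop (nhds z) →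
      ∃ hx : x ∈ A.domain, A ⟨x, hx⟩ = z := by
    intro φ x z hx hz
    apply adjMem
    intro u
    have l1 : Filter.Tendsto (fun n => ⟪A u, ((φ n : H))⟫) Filter.atTop (nhds ⟪A u, x⟫) :=
      Filter.Tendsto.inner tendsto_const_nhds hx
    have l2 : Filter.Tendsto (fun n => ⟪(u : H), A (φ n)⟫) Filter.atTop (nhds ⟪(u : H), z⟫) :=
      Filter.Tendsto.inner tendsto_const_nhds hz
    have heq : (fun n => ⟪A u, ((φ n : H))⟫) = fun n => ⟪(u : H), A (φ n)⟫ :=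
      funext fun n => hsymm u (φ n)
    rw [heq] at l1
    exact tendsto_nhds_unique l1 l2
  -- norm bounds for A + λ
  have boundA : ∀ lam : ℝ, 0 ≤ lam → ∀ φ : A.domain,
      ‖A φ‖ ≤ ‖A φ + (lam : ℂ) • (φ : H)‖ ∧ lam * ‖(φ : H)‖ ≤ ‖A φ + (lam : ℂ) • (φ : H)‖ := by
    intro lam hlam φ
    have key : ‖A φ + (lam : ℂ) • (φ : H)‖ ^ 2 =
        ‖A φ‖ ^ 2 + 2 * lam * (⟪A φ, (φ : H)⟫).re + lam ^ 2 * ‖(φ : H)‖ ^ 2 := by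
      rw [norm_add_sq (𝕜 := ℂ), inner_smul_right, norm_smul]
      simp only [RCLike.re_to_complex, Complex.re_ofReal_mul, Complex.norm_real,
        Real.norm_eq_abs, abs_of_nonneg hlam]
      ring
    have e1 : ‖A φ‖ ^ 2 ≤ ‖A φ + (lam : ℂ) • (φ : H)‖ ^ 2 := by
      nlinarith [hApos φ, mul_nonneg hlam (hApos φ), sq_nonneg (lam * ‖(φ : H)‖)]
    have e2 : (lam * ‖(φ : H)‖) ^ 2 ≤ ‖A φ + (lam : ℂ) • (φ : H)‖ ^ 2 := by
      nlinarith [hApos φ, mul_nonneg hlam (hApos φ), sq_nonneg ‖A φ‖]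
    constructor
    · exact (pow_le_pow_iff_left₀ (norm_nonneg _) (norm_nonneg _) (by norm_num)).mp e1
    · exact (pow_le_pow_iff_left₀ (mul_nonneg hlam (norm_nonneg _)) (norm_nonneg _)
        (by norm_num)).mp e2
  -- A + λ is surjective for λ > 0
  have surjA : ∀ lam : ℝ, 0 < lam → ∀ y : H, ∃ φ : A.domain,
      A φ + (lam : ℂ) • (φ : H) = y := by
    intro lam hlam y
    set f : A.domain →ₗ[ℂ] H := A.toFun + (lam : ℂ) • A.domain.subtype with hf
    have hfapp : ∀ φ : A.domain, f φ = A φ + (lam : ℂ) • (φ : H) := by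
      intro φ
      simp [hf]
    set M := LinearMap.range f with hM
    have hMc : IsClosed (M : Set H) := by
      apply IsSeqClosed.isClosed
      intro u x hu hux
      choose φ hφ using fun n => LinearMap.mem_range.mp (hu n)
      have hcu : CauchySeq u := hux.cauchySeq
      have hdif : ∀ n m : ℕ, A (φ n - φ m) + (lam : ℂ) • ((φ n - φ m : A.domain) : H)
          = u n - u m := by
        intro n m
        rw [← hfapp, f.map_sub, hφ n, hφ m]
      have b1 : ∀ n m, ‖((φ n : H)) - ((φ m : H))‖ ≤ (1 / lam) * ‖u n - u m‖ := by
        intro n m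
        have hb := (boundA lam hlam.le (φ n - φ m)).2
        rw [hdif n m] at hb
        rw [one_div, inv_mul_eq_div, le_div_iff₀ hlam, mul_comm]
        simpa using hb
      have b2 : ∀ n m, ‖A (φ n) - A (φ m)‖ ≤ 1 * ‖u n - u m‖ := by
        intro n m
        have hb := (boundA lam hlam.le (φ n - φ m)).1
        rw [hdif n m] at hb
        rw [one_mul, ← A.map_sub]
        exact hb
      have c1 : CauchySeq (fun n => ((φ n : H))) :=
        cauchy_of_cauchy _ u (1 / lam) (by positivity) b1 hcu
      have c2 : CauchySeq (fun n => A (φ n)) :=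
        cauchy_of_cauchy _ u 1 zero_le_one b2 hcu
      obtain ⟨xx, hxx⟩ := cauchySeq_tendsto_of_complete c1
      obtain ⟨z, hz⟩ := cauchySeq_tendsto_of_complete c2
      obtain ⟨hxm, hxz⟩ := hclosed φ xx z hxx hz
      have l3 : Filter.Tendsto u Filter.atTop (nhds (z + (lam : ℂ) • xx)) := by
        have hue : u = fun n => A (φ n) + (lam : ℂ) • ((φ n : H)) :=
          funext fun n => by rw [← hφ n, hfapp]
        rw [hue]
        exact hz.add (hxx.const_smul _)
      have hxy : x = z + (lam : ℂ) • xx := tendsto_nhds_unique hux l3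
      refine LinearMap.mem_range.mpr ⟨⟨xx, hxm⟩, ?_⟩
      rw [hfapp, hxz, hxy]
    have hMo : Mᗮ = ⊥ := by
      rw [Submodule.eq_bot_iff]
      intro w hw
      have h0 : ∀ φ : A.domain, ⟪f φ, w⟫ = 0 := fun φ =>
        (Submodule.mem_orthogonal M w).mp hw (f φ) (LinearMap.mem_range_self f φ)
      have hadj : ∀ φ : A.domain, ⟪A φ, w⟫ = ⟪(φ : H), (-(lam : ℂ)) • w⟫ := by
        intro φ
        have h1 := h0 φ
        rw [hfapp, inner_add_left, inner_smul_left, Complex.conj_ofReal] at h1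
        rw [inner_smul_right]
        linear_combination h1
      obtain ⟨hwm, hww⟩ := adjMem w ((-(lam : ℂ)) • w) hadj
      have hpos := hApos ⟨w, hwm⟩
      rw [hww] at hpos
      have hre : (⟪(-(lam : ℂ)) • w, w⟫).re = -lam * ‖w‖ ^ 2 := by
        rw [inner_smul_left, map_neg, Complex.conj_ofReal]
        have h2 : (⟪w, w⟫ : ℂ) = (‖w‖ ^ 2 : ℝ) := by
          have := inner_self_eq_norm_sq_to_K (𝕜 := ℂ) w
          simpa using this
        rw [h2, neg_mul, Complex.neg_re, ← Complex.ofReal_mul, Complex.ofReal_re]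
        ring
      rw [hre] at hpos
      have hw2 : ‖w‖ ^ 2 = 0 := le_antisymm (by nlinarith) (sq_nonneg _)
      have hwz : ‖w‖ = 0 := by
        exact pow_eq_zero_iff (M₀ := ℝ) (n := 2) (by norm_num) |>.mp hw2
      exact norm_eq_zero.mp hwz
    have hMtop : M = ⊤ := by
      have h1 : M.topologicalClosure = ⊤ := Submodule.topologicalClosure_eq_top_iff.mpr hMo
      rw [← h1, hMc.submodule_topologicalClosure_eq]
    have hy : y ∈ M := hMtop ▸ Submodule.mem_top
    obtain ⟨φ, hφ⟩ := LinearMap.mem_range.mp hy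
    exact ⟨φ, by rw [← hfapp]; exact hφ⟩
  -- subtraction lemma for B on A.domain
  have hBf_sub : ∀ φ ψ : A.domain,
      B ⟨((φ - ψ : A.domain) : H), hdomB (φ - ψ).2⟩ =
        B ⟨(φ : H), hdomB φ.2⟩ - B ⟨(ψ : H), hdomB ψ.2⟩ := by
    intro φ ψ
    have hmem : (⟨((φ - ψ : A.domain) : H), hdomB (φ - ψ).2⟩ : B.domain) =
        ⟨(φ : H), hdomB φ.2⟩ - ⟨(ψ : H), hdomB ψ.2⟩ := by
      apply Subtype.ext
      simp
    rw [hmem, B.map_sub]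
  -- coercivity of A + B + λ
  have coer : ∀ lam : ℝ, 0 ≤ lam → ∀ φ : A.domain,
      (c + lam) * ‖(φ : H)‖ ≤ ‖A φ + B ⟨(φ : H), hdomB φ.2⟩ + (lam : ℂ) • (φ : H)‖ := by
    intro lam hlam φ
    have hsm : (⟪(lam : ℂ) • (φ : H), (φ : H)⟫).re = lam * ‖(φ : H)‖ ^ 2 := by
      rw [inner_smul_left, Complex.conj_ofReal]
      rw [Complex.re_ofReal_mul]
      congr 1
      have := inner_self_eq_norm_sq (𝕜 := ℂ) ((φ : H))
      simpa using this
    have h1 : (c + lam) * ‖(φ : H)‖ ^ 2 ≤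
        (⟪A φ + B ⟨(φ : H), hdomB φ.2⟩ + (lam : ℂ) • (φ : H), (φ : H)⟫).re := by
      rw [inner_add_left, inner_add_left]
      simp only [Complex.add_re, hsm]
      nlinarith [hApos φ, hBcoer φ]
    have h2 : (⟪A φ + B ⟨(φ : H), hdomB φ.2⟩ + (lam : ℂ) • (φ : H), (φ : H)⟫).re ≤
        ‖A φ + B ⟨(φ : H), hdomB φ.2⟩ + (lam : ℂ) • (φ : H)‖ * ‖(φ : H)‖ := by
      have := re_inner_le_norm (𝕜 := ℂ)
        (A φ + B ⟨(φ : H), hdomB φ.2⟩ + (lam : ℂ) • (φ : H)) ((φ : H))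
      simpa only [RCLike.re_to_complex] using this
    rcases eq_or_lt_of_le (norm_nonneg ((φ : H))) with h | h
    · rw [← h]
      simp [norm_nonneg]
    · exact le_of_mul_le_mul_right (by nlinarith) h
  -- surjectivity predicate
  set S : ℝ → Prop := fun lam => ∀ y : H, ∃ φ : A.domain,
    A φ + B ⟨(φ : H), hdomB φ.2⟩ + (lam : ℂ) • (φ : H) = y with hS
  -- A + B + λ₀ is surjective for suitable λ₀ > 0
  have big : ∃ lam0 : ℝ, 0 ≤ lam0 ∧ S lam0 := by
    obtain ⟨C, hC, hCb⟩ := hBbound ((κ + 1) / 2) (by linarith)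
    set κ' : ℝ := (κ + 1) / 2 with hκ'def
    have hκ'0 : 0 ≤ κ' := by rw [hκ'def]; linarith
    have hκ'1 : κ' < 1 := by rw [hκ'def]; linarith
    set lam0 : ℝ := 2 * C / (1 - κ') with hlam0def
    have hlam0 : 0 < lam0 := by
      apply div_pos (by linarith) (by linarith)
    have hCl : C / lam0 = (1 - κ') / 2 := by
      rw [hlam0def, div_div_eq_mul_div, mul_comm 2 C, mul_div_mul_left _ _ (ne_of_gt hC)]
    set r : ℝ := (κ' + 1) / 2 with hrdef
    have hr0 : 0 ≤ r := by rw [hrdef]; linarith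
    have hr1 : r < 1 := by rw [hrdef]; linarith
    refine ⟨lam0, hlam0.le, ?_⟩
    intro y
    choose R hR using surjA lam0 hlam0
    set F : H → H := fun u => y - B ⟨((R u : H)), hdomB (R u).2⟩ with hF
    have hlip : ∀ u v : H, ‖F u - F v‖ ≤ r * ‖u - v‖ := by
      intro u v
      have hd : A (R u - R v) + (lam0 : ℂ) • ((R u - R v : A.domain) : H) = u - v := by
        rw [A.map_sub, AddSubgroupClass.coe_sub, smul_sub, sub_add_sub_comm, hR u, hR v]
      have hb1 := (boundA lam0 hlam0.le (R u - R v)).1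
      rw [hd] at hb1
      have hb2 := (boundA lam0 hlam0.le (R u - R v)).2
      rw [hd] at hb2
      have hBb := hCb (R u - R v)
      have hFuv : F u - F v =
          -(B ⟨((R u - R v : A.domain) : H), hdomB (R u - R v).2⟩) := by
        simp only [hF]
        rw [hBf_sub]
        abel
      rw [hFuv, norm_neg]
      have hψ : ‖((R u - R v : A.domain) : H)‖ ≤ ‖u - v‖ / lam0 := by
        rw [le_div_iff₀ hlam0, mul_comm]
        exact hb2
      calc ‖B ⟨((R u - R v : A.domain) : H), hdomB (R u - R v).2⟩‖
          ≤ κ' * ‖A (R u - R v)‖ + C * ‖((R u - R v : A.domain) : H)‖ := hBb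
        _ ≤ κ' * ‖u - v‖ + C * (‖u - v‖ / lam0) := by gcongr
        _ = (κ' + C / lam0) * ‖u - v‖ := by ring
        _ = r * ‖u - v‖ := by rw [hCl, hrdef]; ring
    obtain ⟨z, hz⟩ := exists_fixed F r hr0 hr1 hlip
    refine ⟨R z, ?_⟩
    simp only [hF] at hz
    have h1 := hR z
    conv at h1 => rhs; rw [← hz]
    have e : A (R z) + B ⟨((R z : H)), hdomB (R z).2⟩ + (lam0 : ℂ) • ((R z : H)) =
        (A (R z) + (lam0 : ℂ) • ((R z : H))) + B ⟨((R z : H)), hdomB (R z).2⟩ := by abel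
    rw [e, h1]
    abel
  -- stepping down
  have step : ∀ lam mu : ℝ, 0 ≤ lam → 0 ≤ mu → |lam - mu| ≤ c / 2 → S lam → S mu := by
    intro lam mu hlam hmu hdist hSl y
    choose ρ hρ using hSl
    set F : H → H := fun u => ((ρ (y + ((lam - mu : ℝ) : ℂ) • u) : H)) with hF
    have hlip : ∀ u v : H, ‖F u - F v‖ ≤ (1 / 2 : ℝ) * ‖u - v‖ := by
      intro u v
      set w1 : H := y + ((lam - mu : ℝ) : ℂ) • u with hw1
      set w2 : H := y + ((lam - mu : ℝ) : ℂ) • v with hw2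
      have e : A (ρ w1) - A (ρ w2) +
          (B ⟨((ρ w1 : H)), hdomB (ρ w1).2⟩ - B ⟨((ρ w2 : H)), hdomB (ρ w2).2⟩) +
          ((lam : ℂ) • ((ρ w1 : H)) - (lam : ℂ) • ((ρ w2 : H))) =
          (A (ρ w1) + B ⟨((ρ w1 : H)), hdomB (ρ w1).2⟩ + (lam : ℂ) • ((ρ w1 : H))) -
          (A (ρ w2) + B ⟨((ρ w2 : H)), hdomB (ρ w2).2⟩ + (lam : ℂ) • ((ρ w2 : H))) := by
        abel
      have hdw : A (ρ w1 - ρ w2) +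
          B ⟨((ρ w1 - ρ w2 : A.domain) : H), hdomB (ρ w1 - ρ w2).2⟩ +
          (lam : ℂ) • ((ρ w1 - ρ w2 : A.domain) : H) = w1 - w2 := by
        rw [A.map_sub, hBf_sub, AddSubgroupClass.coe_sub, smul_sub, e, hρ w1, hρ w2]
      have hco := coer lam hlam (ρ w1 - ρ w2)
      rw [hdw] at hco
      have hw12 : w1 - w2 = ((lam - mu : ℝ) : ℂ) • (u - v) := by
        rw [hw1, hw2, smul_sub]
        abel
      have hnw : ‖w1 - w2‖ ≤ (c / 2) * ‖u - v‖ := by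
        rw [hw12, norm_smul, Complex.norm_real, Real.norm_eq_abs]
        gcongr
      have hFuv : F u - F v = ((ρ w1 - ρ w2 : A.domain) : H) := by
        simp only [hF, AddSubgroupClass.coe_sub]
        rfl
      rw [hFuv]
      nlinarith [norm_nonneg ((ρ w1 - ρ w2 : A.domain) : H), norm_nonneg (u - v),
        mul_nonneg hlam (norm_nonneg ((ρ w1 - ρ w2 : A.domain) : H))]
    obtain ⟨z, hz⟩ := exists_fixed F (1 / 2) (by norm_num) (by norm_num) hlip
    simp only [hF] at hz
    refine ⟨ρ (y + ((lam - mu : ℝ) : ℂ) • z), ?_⟩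
    have h1 := hρ (y + ((lam - mu : ℝ) : ℂ) • z)
    have hsml : (lam : ℂ) • ((ρ (y + ((lam - mu : ℝ) : ℂ) • z) : H)) = (lam : ℂ) • z := by
      rw [hz]
    have hsmm : (mu : ℂ) • ((ρ (y + ((lam - mu : ℝ) : ℂ) • z) : H)) = (mu : ℂ) • z := by
      rw [hz]
    rw [hsml] at h1
    have key : (((lam - mu : ℝ) : ℂ)) • z = (lam : ℂ) • z - (mu : ℂ) • z := by
      push_cast
      rw [sub_smul]
    conv at h1 => rhs; rw [key]
    rw [hsmm]
    calc A (ρ (y + ((lam - mu : ℝ) : ℂ) • z)) +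
          B ⟨((ρ (y + ((lam - mu : ℝ) : ℂ) • z) : H)),
            hdomB (ρ (y + ((lam - mu : ℝ) : ℂ) • z)).2⟩ + (mu : ℂ) • z
        = (A (ρ (y + ((lam - mu : ℝ) : ℂ) • z)) +
          B ⟨((ρ (y + ((lam - mu : ℝ) : ℂ) • z) : H)),
            hdomB (ρ (y + ((lam - mu : ℝ) : ℂ) • z)).2⟩ + (lam : ℂ) • z) -
          ((lam : ℂ) • z - (mu : ℂ) • z) := by abel
      _ = y + ((lam : ℂ) • z - (mu : ℂ) • z) - ((lam : ℂ) • z - (mu : ℂ) • z) := by rw [h1]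
      _ = y := by abel
  -- conclude S 0
  have S0 : S 0 := by
    obtain ⟨lam0, hlam0, hSlam0⟩ := big
    have hdown : ∀ n : ℕ, S (max 0 (lam0 - n * (c / 2))) := by
      intro n
      induction n with
      | zero => simpa [max_eq_right hlam0] using hSlam0
      | succ n ih =>
        apply step (max 0 (lam0 - n * (c / 2))) _ (le_max_left _ _) (le_max_left _ _) _ ih
        have h1 : max 0 (lam0 - (n + 1 : ℕ) * (c / 2)) ≤ max 0 (lam0 - n * (c / 2)) := by
          apply max_le_max le_rfl
          push_cast
          nlinarith
        have h2 : max 0 (lam0 - n * (c / 2)) ≤ max 0 (lam0 - (n + 1 : ℕ) * (c / 2)) + c / 2 := by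
          apply max_le
          · have := le_max_left (0 : ℝ) (lam0 - (n + 1 : ℕ) * (c / 2)); linarith
          · have := le_max_right (0 : ℝ) (lam0 - (n + 1 : ℕ) * (c / 2)); push_cast; push_cast at this; nlinarith
        rw [abs_le]
        constructor <;> linarith
    obtain ⟨n, hn⟩ := exists_nat_ge (lam0 / (c / 2))
    have hle : lam0 - n * (c / 2) ≤ 0 := by
      rw [div_le_iff₀ (by positivity)] at hn
      linarith
    have := hdown n
    rwa [max_eq_left hle] at this
  -- assemble
  have hsolve : ∀ y : H, ∃ φ : A.domain, A φ + B ⟨(φ : H), hdomB φ.2⟩ = y := by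
    intro y
    obtain ⟨φ, hφ⟩ := S0 y
    refine ⟨φ, ?_⟩
    simpa using hφ
  have hbound : ∀ (y : H) (φ : A.domain), A φ + B ⟨(φ : H), hdomB φ.2⟩ = y →
      ‖(φ : H)‖ ≤ (1 / c) * ‖y‖ := by
    intro y φ hφ
    have := coer 0 le_rfl φ
    simp only [Complex.ofReal_zero, zero_smul, add_zero] at this
    rw [hφ] at this
    rw [div_mul_eq_mul_div, le_div_iff₀ hc, mul_comm]
    linarith
  refine ⟨fun y => ?_, hbound⟩
  obtain ⟨φ, hφ⟩ := hsolve y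
  refine ⟨φ, hφ, fun ψ hψ => ?_⟩
  have hd : A (ψ - φ) + B ⟨((ψ - φ : A.domain) : H), hdomB (ψ - φ).2⟩ = 0 := by
    have hψ' : A ψ + B ⟨(ψ : H), hdomB ψ.2⟩ = y := hψ
    rw [A.map_sub, hBf_sub, sub_add_sub_comm, hψ', hφ, sub_self]
  have := coer 0 le_rfl (ψ - φ)
  simp only [Complex.ofReal_zero, zero_smul, add_zero] at this
  rw [hd] at this
  simp only [norm_zero, add_zero] at this
  have h0 : ‖((ψ - φ : A.domain) : H)‖ = 0 := by nlinarith [norm_nonneg ((ψ - φ : A.domain) : H)]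
  have : ((ψ - φ : A.domain) : H) = 0 := norm_eq_zero.mp h0
  have : (ψ : H) = (φ : H) := by
    have h := this
    rw [AddSubgroupClass.coe_sub, sub_eq_zero] at h
    exact h
  exact Subtype.ext this
end

section
/- Let Ω = (0,1)ⁿ and let grad_c denote the gradient defined on C_c^∞(Ω) as an operator from L²(Ω) to L²(Ω)ⁿ, with closure the minimal gradient (whose domain is H¹₀(Ω)), and let div̊ denote the closure of the divergence on C_c^∞(Ω)ⁿ. Then the composition div̊ ∘ grad̊ is a closed operator in L²(Ω). -/
open Filter Topology

open scoped RealInnerProductSpace in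
/-- Abstract formulation of: on `Ω = (0,1)ⁿ`, the composition
`div̊ ∘ grad̊` of the minimal divergence with the minimal gradient is a closed operator
in `L²(Ω)`. Here `H` plays the role of `L²(Ω)`, `K` the role of `L²(Ω)ⁿ`, `G` the minimal
gradient `grad̊` (a closed densely defined operator, domain `H¹₀(Ω)`) and `D` the minimal
divergence `div̊` (closed), and the integration-by-parts duality
`⟪Gu, v⟫ = -⟪u, Dv⟫` (coming from `grad̊ ⊆ -div*` and `div̊ ⊆ -grad*`) is assumed.
The conclusion is that the graph of the composition `D ∘ G` is closed. -/
theorem stmt7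
    {H K : Type*} [NormedAddCommGroup H] [InnerProductSpace ℝ H] [CompleteSpace H]
    [NormedAddCommGroup K] [InnerProductSpace ℝ K] [CompleteSpace K]
    (G : H →ₗ.[ℝ] K) (D : K →ₗ.[ℝ] H)
    (hG : G.IsClosed) (hD : D.IsClosed)
    (hGdense : Dense (G.domain : Set H))
    (hduality : ∀ (u : G.domain) (v : D.domain), ⟪G u, (v : K)⟫ = -⟪(u : H), D v⟫) :
    IsClosed {p : H × H |
      ∃ (hu : p.1 ∈ G.domain) (hv : G ⟨p.1, hu⟩ ∈ D.domain),
        D ⟨G ⟨p.1, hu⟩, hv⟩ = p.2} := by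
  rw [← isSeqClosed_iff_isClosed]
  intro f p hf hfp
  choose hu hv heq using hf
  set u : ℕ → G.domain := fun n => ⟨(f n).1, hu n⟩ with hu_def
  set v : ℕ → D.domain := fun n => ⟨G (u n), hv n⟩ with hv_def
  have hDv : ∀ n, D (v n) = (f n).2 := heq
  have h1 : Tendsto (fun n => (f n).1) atTop (𝓝 p.1) :=
    (continuous_fst.tendsto p).comp hfp
  have h2 : Tendsto (fun n => (f n).2) atTop (𝓝 p.2) :=
    (continuous_snd.tendsto p).comp hfp
  -- key identity via duality
  have hkey : ∀ n m, ‖(G (u n) : K) - G (u m)‖ ^ 2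
      ≤ ‖(f n).1 - (f m).1‖ * ‖(f n).2 - (f m).2‖ := by
    intro n m
    have hGsub : G (u n - u m) = G (u n) - G (u m) := map_sub _ _ _
    have hvcoe : ((v n - v m : D.domain) : K) = G (u n) - G (u m) := rfl
    have hd := hduality (u n - u m) (v n - v m)
    rw [hGsub, hvcoe] at hd
    have hDsub : D (v n - v m) = (f n).2 - (f m).2 := by
      rw [D.map_sub, hDv, hDv]
    have hucoe : ((u n - u m : G.domain) : H) = (f n).1 - (f m).1 := rfl
    rw [hDsub, hucoe] at hd
    have : ‖(G (u n) : K) - G (u m)‖ ^ 2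
        = -⟪(f n).1 - (f m).1, (f n).2 - (f m).2⟫ := by
      rw [← hd, real_inner_self_eq_norm_sq]
    rw [this]
    calc -⟪(f n).1 - (f m).1, (f n).2 - (f m).2⟫
        ≤ |⟪(f n).1 - (f m).1, (f n).2 - (f m).2⟫| := neg_le_abs _
      _ ≤ ‖(f n).1 - (f m).1‖ * ‖(f n).2 - (f m).2‖ := abs_real_inner_le_norm _ _
  -- G (u n) is Cauchy
  have hc1 : CauchySeq (fun n => (f n).1) := h1.cauchySeq
  have hc2 : CauchySeq (fun n => (f n).2) := h2.cauchySeq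
  have hGc : CauchySeq (fun n => (G (u n) : K)) := by
    rw [Metric.cauchySeq_iff]
    intro ε hε
    obtain ⟨N1, hN1⟩ := Metric.cauchySeq_iff.mp hc1 ε hε
    obtain ⟨N2, hN2⟩ := Metric.cauchySeq_iff.mp hc2 ε hε
    refine ⟨max N1 N2, fun n hn m hm => ?_⟩
    have e1 := hN1 n (le_of_max_le_left hn) m (le_of_max_le_left hm)
    have e2 := hN2 n (le_of_max_le_right hn) m (le_of_max_le_right hm)
    rw [dist_eq_norm] at e1 e2 ⊢
    have hk := hkey n m
    have hnn : (0:ℝ) ≤ ‖(f n).1 - (f m).1‖ := norm_nonneg _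
    have hnn2 : (0:ℝ) ≤ ‖(f n).2 - (f m).2‖ := norm_nonneg _
    nlinarith [norm_nonneg ((G (u n) : K) - G (u m))]
  obtain ⟨k, hk⟩ := cauchySeq_tendsto_of_complete hGc
  -- use closedness of G
  have hGmem : (p.1, k) ∈ G.graph := by
    refine hG.mem_of_tendsto (h1.prodMk_nhds hk) ?_
    exact Eventually.of_forall fun n => G.mem_graph (u n)
  obtain ⟨y, hy1, hy2⟩ := G.mem_graph_iff.mp hGmem
  have hy1' : (y : H) = p.1 := hy1
  have hy2' : G y = k := hy2
  -- use closedness of D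
  have hDmem : (k, p.2) ∈ D.graph := by
    refine hD.mem_of_tendsto (hk.prodMk_nhds h2) ?_
    refine Eventually.of_forall fun n => ?_
    have := D.mem_graph (v n)
    rwa [hDv n] at this
  obtain ⟨z, hz1, hz2⟩ := D.mem_graph_iff.mp hDmem
  have hz1' : (z : K) = k := hz1
  have hz2' : D z = p.2 := hz2
  have hup : p.1 ∈ G.domain := hy1' ▸ y.prop
  have hGy : G ⟨p.1, hup⟩ = k := by
    have : (⟨p.1, hup⟩ : G.domain) = y := Subtype.ext hy1'.symm
    rw [this, hy2']
  have hvp : G ⟨p.1, hup⟩ ∈ D.domain := by rw [hGy]; exact hz1' ▸ z.prop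
  refine ⟨hup, hvp, ?_⟩
  have : (⟨G ⟨p.1, hup⟩, hvp⟩ : D.domain) = z := Subtype.ext (hGy.trans hz1'.symm)
  rw [this, hz2']
end
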